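/- Let A be a commutative Noetherian local ring of prime characteristic p, let F: A → A be the Frobenius endomorphism (F(x) = x^p), and let a ∈ A. Let J(a) denote the left ideal of A[Θ;F] generated by the set {a^{p^e−1}·Θ^e − 1 : e ≥ 1}. Regard the localization A_a as a left A[Θ;F]-module via the Frobenius action Θ·y := y^p for y ∈ A_a. Then A_a is isomorphic, as a left A[Θ;F]-module, to A[Θ;F]/J(a). -/

import Mathlib

/-- The left skew polynomial ring `A[Θ;φ]`; for `φ = F` the Frobenius endomorphism this
is the Frobenius skew polynomial ring `A[Θ;F]`. -/
structure LeftSkewPolynomialRing (A : Type*) [CommRing A] (φ : A →+* A)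
    (B : Type*) [Ring B] where
  ι : A →+* B
  θ : B
  theta_mul : ∀ a : A, θ * ι a = ι (φ a) * θ
  basis : Function.Bijective fun f : ℕ →₀ A => f.sum fun i a => ι a * θ ^ i

lemma theta_pow_mul {A : Type*} [CommRing A] (p : ℕ) [Fact p.Prime] [CharP A p]
    {B : Type*} [Ring B] (sk : LeftSkewPolynomialRing A (frobenius A p) B)
    (i : ℕ) (b : A) : sk.θ ^ i * sk.ι b = sk.ι (b ^ p ^ i) * sk.θ ^ i := by
  induction i with
  | zero => simp
  | succ n ih =>
      rw [pow_succ', mul_assoc, ih, ← mul_assoc, sk.theta_mul, frobenius_def,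
        mul_assoc, ← pow_succ', ← pow_mul, ← pow_succ]

set_option maxHeartbeats 1000000 in
/-- Let `A` be a commutative Noetherian local ring of prime characteristic `p`, with
Frobenius `F`, and let `a ∈ A`.  Let `J(a)` be the left ideal of `A[Θ;F]` generated by
`{a^{p^e-1}·Θ^e - 1 : e ≥ 1}`.  Regarding the localization `A_a` as a left
`A[Θ;F]`-module via the Frobenius action `Θ • y = y^p`, one has
`A_a ≅ A[Θ;F]/J(a)` as left `A[Θ;F]`-modules. -/
theorem localization_iso_skewPolynomialRing_quotient
    {A : Type*} [CommRing A] [IsNoetherianRing A] [IsLocalRing A]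
    (p : ℕ) [Fact p.Prime] [CharP A p]
    {B : Type*} [Ring B] (sk : LeftSkewPolynomialRing A (frobenius A p) B)
    (a : A)
    (inst : Module B (Localization.Away a))
    (hι : ∀ (r : A) (y : Localization.Away a),
      (letI := inst; sk.ι r • y) = algebraMap A (Localization.Away a) r * y)
    (hθ : ∀ y : Localization.Away a, (letI := inst; sk.θ • y) = y ^ p) :
    letI := inst
    Nonempty ((Localization.Away a) ≃ₗ[B]
      B ⧸ Submodule.span B
        {z : B | ∃ e : ℕ, 1 ≤ e ∧ z = sk.ι (a ^ (p ^ e - 1)) * sk.θ ^ e - 1}) := by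
  letI := inst
  classical
  have hp : p.Prime := Fact.out
  have hp2 : 2 ≤ p := hp.two_le
  set M := Localization.Away a with hMdef
  have hι' : ∀ (r : A) (y : M), sk.ι r • y = algebraMap A M r * y := hι
  have hθ' : ∀ y : M, sk.θ • y = y ^ p := hθ
  set u : M := IsLocalization.Away.invSelf a with hudef
  have hu : algebraMap A M a * u = 1 := IsLocalization.Away.mul_invSelf a
  have hU : ∀ k : ℕ, algebraMap A M (a ^ k) * u ^ k = 1 := by
    intro k; rw [map_pow, ← mul_pow, hu, one_pow]
  have hθe : ∀ (e : ℕ) (y : M), sk.θ ^ e • y = y ^ p ^ e := by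
    intro e
    induction e with
    | zero => intro y; simp
    | succ n ih =>
        intro y
        rw [pow_succ, mul_smul, hθ', ih, ← pow_mul, ← pow_succ']
  have hact : ∀ (c : A) (i : ℕ), (sk.ι c * sk.θ ^ i) • u = algebraMap A M c * u ^ p ^ i := by
    intro c i; rw [mul_smul, hθe, hι']
  set J : Submodule B B := Submodule.span B
      {z : B | ∃ e : ℕ, 1 ≤ e ∧ z = sk.ι (a ^ (p ^ e - 1)) * sk.θ ^ e - 1} with hJdef
  set φ : B →ₗ[B] M := LinearMap.toSpanSingleton B M u with hφdef
  have hφ : ∀ x : B, φ x = x • u := fun x => rfl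
  -- J ≤ ker φ
  have hJker : J ≤ LinearMap.ker φ := by
    rw [hJdef, Submodule.span_le]
    rintro z ⟨e, he, rfl⟩
    have h1pe : 1 ≤ p ^ e := Nat.one_le_pow _ _ hp.pos
    have h5 : algebraMap A M (a ^ (p ^ e - 1)) * u ^ p ^ e = u := by
      have hupow : u ^ p ^ e = u ^ (p ^ e - 1) * u := by
        rw [← pow_succ]; congr 1; omega
      rw [hupow, ← mul_assoc, hU, one_mul]
    simp only [SetLike.mem_coe, LinearMap.mem_ker, hφ]
    rw [sub_smul, one_smul, hact, h5, sub_self]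
  -- key step lemma in J
  have hstep : ∀ (c : A) (i e : ℕ), 1 ≤ e →
      sk.ι c * sk.θ ^ i - sk.ι (c * a ^ (p ^ (i + e) - p ^ i)) * sk.θ ^ (i + e) ∈ J := by
    intro c i e he
    have hgen : sk.ι (a ^ (p ^ e - 1)) * sk.θ ^ e - 1 ∈ J :=
      Submodule.subset_span ⟨e, he, rfl⟩
    have hexp : (p ^ e - 1) * p ^ i = p ^ (i + e) - p ^ i := by
      rw [Nat.sub_mul, one_mul, ← pow_add, add_comm]
    have hmul : (sk.ι c * sk.θ ^ i) * (sk.ι (a ^ (p ^ e - 1)) * sk.θ ^ e - 1)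
        = sk.ι (c * a ^ (p ^ (i + e) - p ^ i)) * sk.θ ^ (i + e) - sk.ι c * sk.θ ^ i := by
      rw [mul_sub, mul_one]
      congr 1
      rw [mul_assoc (sk.ι c), ← mul_assoc (sk.θ ^ i), theta_pow_mul p sk i,
        ← mul_assoc, ← mul_assoc, ← map_mul, mul_assoc, ← pow_add, ← pow_mul, hexp]
    have heq : sk.ι c * sk.θ ^ i - sk.ι (c * a ^ (p ^ (i + e) - p ^ i)) * sk.θ ^ (i + e)
        = -((sk.ι c * sk.θ ^ i) * (sk.ι (a ^ (p ^ e - 1)) * sk.θ ^ e - 1)) := by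
      rw [hmul, neg_sub]
    rw [heq]
    exact Submodule.neg_mem _ (by rw [← smul_eq_mul]; exact Submodule.smul_mem _ _ hgen)
  have hcong : ∀ (c : A) (i e : ℕ), 1 ≤ e →
      J.mkQ (sk.ι c * sk.θ ^ i) = J.mkQ (sk.ι (c * a ^ (p ^ (i + e) - p ^ i)) * sk.θ ^ (i + e)) := by
    intro c i e he
    rw [← sub_eq_zero, ← map_sub, Submodule.mkQ_apply, Submodule.Quotient.mk_eq_zero]
    exact hstep c i e he
  -- ker φ ≤ J
  have hker : LinearMap.ker φ ≤ J := by
    intro x hx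
    have hxu : x • u = 0 := hx
    obtain ⟨f, hf⟩ := sk.basis.2 x
    simp only at hf
    set n : ℕ := f.support.sup id + 1 with hndef
    have hin : ∀ i ∈ f.support, i < n := by
      intro i hi
      have h7 : i ≤ f.support.sup id := by simpa using Finset.le_sup (f := id) hi
      omega
    set d : A := ∑ i ∈ f.support, f i * a ^ (p ^ n - p ^ i) with hddef
    have h1sum : x • u = ∑ i ∈ f.support, algebraMap A M (f i) * u ^ p ^ i := by
      rw [← hf, Finsupp.sum, Finset.sum_smul]
      exact Finset.sum_congr rfl fun i _ => hact _ _
    have h3 : algebraMap A M (a ^ p ^ n) * (x • u) = algebraMap A M d := by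
      rw [h1sum, Finset.mul_sum, hddef, map_sum]
      refine Finset.sum_congr rfl fun i hi => ?_
      have hpi : p ^ i ≤ p ^ n := Nat.pow_le_pow_right hp.one_le (le_of_lt (hin i hi))
      calc algebraMap A M (a ^ p ^ n) * (algebraMap A M (f i) * u ^ p ^ i)
          = algebraMap A M (f i * a ^ (p ^ n - p ^ i)) * (algebraMap A M (a ^ p ^ i) * u ^ p ^ i) := by
            rw [← pow_sub_mul_pow a hpi, map_mul, map_mul]; ring
        _ = algebraMap A M (f i * a ^ (p ^ n - p ^ i)) := by rw [hU, mul_one]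
    have h2 : algebraMap A M d = 0 := by rw [← h3, hxu, mul_zero]
    obtain ⟨m, hm⟩ := (IsLocalization.map_eq_zero_iff (Submonoid.powers a) M d).mp h2
    obtain ⟨k, hk⟩ := m.2
    have hm' : a ^ k * d = 0 := by rw [show a ^ k = (m : A) from hk]; exact hm
    -- big exponent kills d
    have h4 : 1 ≤ p ^ n := Nat.one_le_pow _ _ hp.pos
    have hkle : k ≤ p ^ (n + (k + 1)) - p ^ n := by
      have h1 : k + 2 ≤ 2 ^ (k + 1) := Nat.lt_two_pow_self (n := k + 1)
      have h2' : 2 ^ (k + 1) ≤ p ^ (k + 1) := Nat.pow_le_pow_left hp2 _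
      have h3' : p ^ (n + (k + 1)) = p ^ n * p ^ (k + 1) := pow_add p n (k + 1)
      have h5 : k + p ^ n ≤ p ^ n * p ^ (k + 1) := by nlinarith
      omega
    have hzero : d * a ^ (p ^ (n + (k + 1)) - p ^ n) = 0 := by
      rw [← pow_sub_mul_pow a hkle, ← mul_assoc, mul_comm d, mul_assoc, mul_comm d, hm', mul_zero]
    have hmk : J.mkQ x = 0 := by
      calc J.mkQ x = J.mkQ (∑ i ∈ f.support, sk.ι (f i) * sk.θ ^ i) := by
              rw [← hf, Finsupp.sum]
        _ = ∑ i ∈ f.support, J.mkQ (sk.ι (f i) * sk.θ ^ i) := map_sum _ _ _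
        _ = ∑ i ∈ f.support, J.mkQ (sk.ι (f i * a ^ (p ^ n - p ^ i)) * sk.θ ^ n) := by
              refine Finset.sum_congr rfl fun i hi => ?_
              have h6 := hcong (f i) i (n - i) (by have := hin i hi; omega)
              rwa [Nat.add_sub_cancel' (le_of_lt (hin i hi))] at h6
        _ = J.mkQ (∑ i ∈ f.support, sk.ι (f i * a ^ (p ^ n - p ^ i)) * sk.θ ^ n) :=
              (map_sum _ _ _).symm
        _ = J.mkQ (sk.ι d * sk.θ ^ n) := by rw [← Finset.sum_mul, ← map_sum]
        _ = J.mkQ (sk.ι (d * a ^ (p ^ (n + (k + 1)) - p ^ n)) * sk.θ ^ (n + (k + 1))) :=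
              hcong d n (k + 1) (by omega)
        _ = 0 := by rw [hzero, map_zero, zero_mul, map_zero]
    rw [Submodule.mkQ_apply, Submodule.Quotient.mk_eq_zero] at hmk
    exact hmk
  -- surjectivity
  have hsurj : Function.Surjective φ := by
    intro z
    obtain ⟨⟨r, s⟩, hz⟩ := IsLocalization.surj (Submonoid.powers a) z
    obtain ⟨n, hn⟩ := s.2
    have hn' : n ≤ p ^ n := le_of_lt (Nat.lt_pow_self (n := n) hp.one_lt)
    refine ⟨sk.ι (r * a ^ (p ^ n - n)) * sk.θ ^ n, ?_⟩
    rw [hφ, hact, map_mul]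
    have hns : (s : A) = a ^ n := (show a ^ n = (s : A) from hn).symm
    have hzr : algebraMap A M r = z * algebraMap A M (a ^ n) := by
      rw [hns] at hz; exact hz.symm
    have hpow : algebraMap A M (a ^ n) * algebraMap A M (a ^ (p ^ n - n)) =
        algebraMap A M (a ^ p ^ n) := by
      rw [← map_mul, mul_comm, pow_sub_mul_pow a hn']
    calc algebraMap A M r * algebraMap A M (a ^ (p ^ n - n)) * u ^ p ^ n
        = z * (algebraMap A M (a ^ n) * algebraMap A M (a ^ (p ^ n - n)) * u ^ p ^ n) := by
          rw [hzr]; ring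
      _ = z * (algebraMap A M (a ^ p ^ n) * u ^ p ^ n) := by rw [hpow]
      _ = z := by rw [hU, mul_one]
  have hkereq : LinearMap.ker φ = J := le_antisymm hker hJker
  exact ⟨(LinearMap.quotKerEquivOfSurjective φ hsurj).symm.trans
    (Submodule.quotEquivOfEq _ _ hkereq)⟩
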